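/- (Weigel) Let G be a group and p a prime. If every subgroup of finite index in G belongs to the class 𝒢(p), then G belongs to the class 𝒢*(p). -/

import Mathlib

/-!
Common definitions for formalizing "Cohomology and profinite topologies for solvable
groups of finite rank" (K. Lorensen).

Group cohomology is defined via inhomogeneous cochains.  The continuous cohomology of the
pro-`p` (resp. profinite) completion of `G` with coefficients in a finite discrete module is
the direct limit, over the normal subgroups `N` of finite `p`-power (resp. finite) index
acting trivially on the module, of the cohomology of the quotients `G ⧸ N`; accordingly, the
statement that the completion map induces an isomorphism on cohomology is rendered as:
the canonical (inflation) maps from this directed system to `H^*(G, M)` are jointly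
surjective, and any class of the system killed in `H^*(G, M)` is killed at a deeper level of
the system.
-/

open Function TensorProduct

universe u v

namespace GoodProfinite

variable {G H : Type u} {M : Type v}

/-- The differential on inhomogeneous cochains of a group `G` with coefficients in a
`G`-module `M` (the action given by `ρ : G →* AddAut M`). -/
def cochainD [Group G] [AddCommGroup M] (ρ : G →* Multiplicative (AddAut M)) (n : ℕ) :
    ((Fin n → G) → M) →+ ((Fin (n + 1) → G) → M) :=
  AddMonoidHom.mk'
    (fun f g =>
      Multiplicative.toAdd (ρ (g 0)) (f fun i => g i.succ) +
        ∑ j : Fin (n + 1), (-1 : ℤ) ^ ((j : ℕ) + 1) • f (Fin.contractNth j (· * ·) g))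
    (by
      intro a b
      funext g
      simp only [Pi.add_apply, map_add, smul_add, Finset.sum_add_distrib]
      abel)

/-- The `n`-cocycles. -/
def cocycleGroup [Group G] [AddCommGroup M] (ρ : G →* Multiplicative (AddAut M)) (n : ℕ) :
    AddSubgroup ((Fin n → G) → M) :=
  (cochainD ρ n).ker

/-- The `n`-coboundaries. -/
def coboundaryGroup [Group G] [AddCommGroup M] (ρ : G →* Multiplicative (AddAut M)) :
    (n : ℕ) → AddSubgroup ((Fin n → G) → M)
  | 0 => ⊥
  | n + 1 => (cochainD ρ n).range

/-- The `n`-th group cohomology of `G` with coefficients in the `G`-module `M`. -/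
def groupCoh [Group G] [AddCommGroup M] (ρ : G →* Multiplicative (AddAut M)) (n : ℕ) : Type (max u v) :=
  cocycleGroup ρ n ⧸ (coboundaryGroup ρ n).addSubgroupOf (cocycleGroup ρ n)

instance [Group G] [AddCommGroup M] (ρ : G →* Multiplicative (AddAut M)) (n : ℕ) :
    AddCommGroup (groupCoh ρ n) :=
  inferInstanceAs (AddCommGroup (_ ⧸ _))

/-- Precomposition of cochains with a group homomorphism. -/
def precompCochain [Group G] [Group H] [AddCommGroup M] (f : G →* H) (n : ℕ) :
    ((Fin n → H) → M) →+ ((Fin n → G) → M) :=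
  AddMonoidHom.mk' (fun c g => c fun i => f (g i)) (fun _ _ => rfl)

lemma comp_contractNth [Group G] [Group H] (f : G →* H) {n : ℕ} (j : Fin (n + 1))
    (g : Fin (n + 1) → G) :
    (fun k => f (Fin.contractNth j (· * ·) g k)) =
      Fin.contractNth j (· * ·) fun i => f (g i) := by
  funext k
  unfold Fin.contractNth
  split_ifs <;> simp [map_mul]

lemma cochainD_precomp [Group G] [Group H] [AddCommGroup M] (f : G →* H)
    (ρ : H →* Multiplicative (AddAut M)) (ρ' : G →* Multiplicative (AddAut M)) (hcomp : ∀ g, ρ' g = ρ (f g)) (n : ℕ)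
    (c : (Fin n → H) → M) :
    cochainD ρ' n (precompCochain f n c) = precompCochain f (n + 1) (cochainD ρ n c) := by
  funext g
  show Multiplicative.toAdd (ρ' (g 0)) (c fun i => f (g i.succ)) +
      ∑ j : Fin (n + 1), (-1 : ℤ) ^ ((j : ℕ) + 1) •
        c (fun i => f (Fin.contractNth j (· * ·) g i)) =
    Multiplicative.toAdd (ρ (f (g 0))) (c fun i => f (g i.succ)) +
      ∑ j : Fin (n + 1), (-1 : ℤ) ^ ((j : ℕ) + 1) •
        c (Fin.contractNth j (· * ·) fun i => f (g i))
  rw [hcomp]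
  congr 1
  refine Finset.sum_congr rfl fun j _ => ?_
  rw [comp_contractNth]

/-- The map on cocycles induced by a group homomorphism with compatible actions. -/
def cocycleMap [Group G] [Group H] [AddCommGroup M] (f : G →* H) (ρ : H →* Multiplicative (AddAut M))
    (ρ' : G →* Multiplicative (AddAut M)) (hcomp : ∀ g, ρ' g = ρ (f g)) (n : ℕ) :
    cocycleGroup ρ n →+ cocycleGroup ρ' n :=
  AddMonoidHom.codRestrict ((precompCochain f n).comp (cocycleGroup ρ n).subtype) _
    (fun x => by
      have hx : cochainD ρ n x.1 = 0 := x.2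
      show precompCochain f n x.1 ∈ (cochainD ρ' n).ker
      rw [AddMonoidHom.mem_ker, cochainD_precomp f ρ ρ' hcomp, hx, map_zero])

/-- The map `H^n(H, M) → H^n(G, M)` on group cohomology induced by a group homomorphism
`f : G →* H` and compatible actions (`ρ' = ρ ∘ f`); e.g. inflation maps. -/
def cohMap [Group G] [Group H] [AddCommGroup M] (f : G →* H) (ρ : H →* Multiplicative (AddAut M))
    (ρ' : G →* Multiplicative (AddAut M)) (hcomp : ∀ g, ρ' g = ρ (f g)) (n : ℕ) :
    groupCoh ρ n →+ groupCoh ρ' n :=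
  QuotientAddGroup.map _ _ (cocycleMap f ρ ρ' hcomp n)
    (by
      intro x hx
      rw [AddSubgroup.mem_addSubgroupOf] at hx
      rw [AddSubgroup.mem_comap, AddSubgroup.mem_addSubgroupOf]
      match n, x, hx with
      | 0, x, hx =>
          have : x.1 = 0 := hx
          show (precompCochain f 0) x.1 ∈ (⊥ : AddSubgroup _)
          rw [this, map_zero]
          exact AddSubgroup.mem_bot.mpr rfl
      | (m + 1), x, hx =>
          obtain ⟨b, hb⟩ := hx
          show (precompCochain f (m + 1)) x.1 ∈ (cochainD ρ' m).range
          exact ⟨precompCochain f m b, by rw [cochainD_precomp f ρ ρ' hcomp, hb]⟩)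

/-- The action of `G ⧸ N` on `M` induced by an action of `G` on which `N` acts trivially. -/
def quotAut [Group G] [AddCommGroup M] (ρ : G →* Multiplicative (AddAut M)) (N : Subgroup G) [N.Normal]
    (h : ∀ x ∈ N, ρ x = 1) : G ⧸ N →* Multiplicative (AddAut M) :=
  QuotientGroup.lift N ρ h

/-- The natural projection `G ⧸ N' →* G ⧸ N` when `N' ≤ N`. -/
def quotMapHom [Group G] (N N' : Subgroup G) [N.Normal] [N'.Normal] (hle : N' ≤ N) :
    G ⧸ N' →* G ⧸ N :=
  QuotientGroup.map N' N (MonoidHom.id G) fun _ hx => hle hx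

lemma quotAut_comp_quotMap [Group G] [AddCommGroup M] (ρ : G →* Multiplicative (AddAut M))
    (N N' : Subgroup G) [N.Normal] [N'.Normal] (hle : N' ≤ N) (h : ∀ x ∈ N, ρ x = 1) :
    ∀ x : G ⧸ N', quotAut ρ N' (fun g hg => h g (hle hg)) x =
      quotAut ρ N h (quotMapHom N N' hle x) := fun x =>
  QuotientGroup.induction_on x fun _ => rfl

/-- The canonical map from the continuous cohomology of the pro-`p` completion of `G`
(the direct limit over normal subgroups of finite `p`-power index acting trivially on `M`
of the cohomology of the corresponding quotients) to `H^*(G, M)` is an isomorphism in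
every degree. -/
def ProPCompletionCohIso (p : ℕ) (G : Type u) [Group G] (M : Type v) [AddCommGroup M]
    (ρ : G →* Multiplicative (AddAut M)) : Prop :=
  ∀ n : ℕ,
    (∀ x : groupCoh ρ n,
      ∃ (N : Subgroup G) (hN : N.Normal),
        haveI := hN
        ∃ (_ : ∃ k, N.index = p ^ k) (h1 : ∀ y ∈ N, ρ y = 1)
          (z : groupCoh (quotAut ρ N h1) n),
          cohMap (QuotientGroup.mk' N) (quotAut ρ N h1) ρ (fun _ => rfl) n z = x) ∧
    (∀ (N : Subgroup G) (hN : N.Normal),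
      haveI := hN
      ∀ (_ : ∃ k, N.index = p ^ k) (h1 : ∀ y ∈ N, ρ y = 1)
        (z : groupCoh (quotAut ρ N h1) n),
        cohMap (QuotientGroup.mk' N) (quotAut ρ N h1) ρ (fun _ => rfl) n z = 0 →
        ∃ (N' : Subgroup G) (hN' : N'.Normal),
          haveI := hN'
          ∃ (_ : ∃ k, N'.index = p ^ k) (hle : N' ≤ N),
            cohMap (quotMapHom N N' hle) (quotAut ρ N h1)
              (quotAut ρ N' fun g hg => h1 g (hle hg))
              (quotAut_comp_quotMap ρ N N' hle h1) n z = 0)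

/-- The analogue of `ProPCompletionCohIso` for the full profinite completion: the canonical
map from the continuous cohomology of the profinite completion of `G` to `H^*(G, M)` is an
isomorphism in every degree. -/
def ProfiniteCompletionCohIso (G : Type u) [Group G] (M : Type v) [AddCommGroup M]
    (ρ : G →* Multiplicative (AddAut M)) : Prop :=
  ∀ n : ℕ,
    (∀ x : groupCoh ρ n,
      ∃ (N : Subgroup G) (hN : N.Normal),
        haveI := hN
        ∃ (_ : N.FiniteIndex) (h1 : ∀ y ∈ N, ρ y = 1)
          (z : groupCoh (quotAut ρ N h1) n),
          cohMap (QuotientGroup.mk' N) (quotAut ρ N h1) ρ (fun _ => rfl) n z = x) ∧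
    (∀ (N : Subgroup G) (hN : N.Normal),
      haveI := hN
      ∀ (_ : N.FiniteIndex) (h1 : ∀ y ∈ N, ρ y = 1)
        (z : groupCoh (quotAut ρ N h1) n),
        cohMap (QuotientGroup.mk' N) (quotAut ρ N h1) ρ (fun _ => rfl) n z = 0 →
        ∃ (N' : Subgroup G) (hN' : N'.Normal),
          haveI := hN'
          ∃ (_ : N'.FiniteIndex) (hle : N' ≤ N),
            cohMap (quotMapHom N N' hle) (quotAut ρ N h1)
              (quotAut ρ N' fun g hg => h1 g (hle hg))
              (quotAut_comp_quotMap ρ N N' hle h1) n z = 0)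

/-- The class `𝒢(p)`: the pro-`p` completion map `G → Ĝ_p` induces an isomorphism
`H^*(Ĝ_p, M) → H^*(G, M)` for every discrete `Ĝ_p`-module `M` of finite `p`-power order,
i.e. for every `G`-module `M` of finite `p`-power order whose action factors through a
quotient of finite `p`-power index. -/
def InGp (p : ℕ) (G : Type u) [Group G] : Prop :=
  ∀ (M : Type u) [AddCommGroup M] (ρ : G →* Multiplicative (AddAut M)),
    (∃ k, Nat.card M = p ^ k) →
    (∃ N : Subgroup G, N.Normal ∧ (∃ k, N.index = p ^ k) ∧ ∀ y ∈ N, ρ y = 1) →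
    ProPCompletionCohIso p G M ρ

/-- The class `𝒢*(p)`: the profinite completion map `G → Ĝ` induces an isomorphism
`H^*(Ĝ, M) → H^*(G, M)` for every discrete `Ĝ`-module `M` of finite `p`-power order,
i.e. for every `G`-module `M` of finite `p`-power order whose action factors through a
quotient of finite index. -/
def InGpStar (p : ℕ) (G : Type u) [Group G] : Prop :=
  ∀ (M : Type u) [AddCommGroup M] (ρ : G →* Multiplicative (AddAut M)),
    (∃ k, Nat.card M = p ^ k) →
    (∃ N : Subgroup G, N.Normal ∧ N.FiniteIndex ∧ ∀ y ∈ N, ρ y = 1) →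
    ProfiniteCompletionCohIso G M ρ

/-- The class `ℱ𝒮`: groups having only finitely many subgroups of each finite index. -/
def InFS (G : Type u) [Group G] : Prop :=
  ∀ n : ℕ, n ≠ 0 → {H : Subgroup G | H.index = n}.Finite

/-- The class `ℱℋ`: groups `G` such that `H^n(G, M)` is finite for every finite
`G`-module `M` and every `n ≥ 0`. -/
def InFH (G : Type u) [Group G] : Prop :=
  ∀ (M : Type u) [AddCommGroup M] [Finite M] (ρ : G →* Multiplicative (AddAut M)) (n : ℕ),
    Finite (groupCoh ρ n)

/-- An abelian group has finite torsion-free rank iff `ℚ ⊗ A` is finite dimensional. -/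
def HasFiniteTorsionFreeRank (A : Type v) [CommGroup A] : Prop :=
  Module.Finite ℚ (ℚ ⊗[ℤ] (Additive A))

/-- An abelian group has finite `p`-rank (its `p`-torsion subgroup is a direct sum of
finitely many cyclic and quasicyclic groups) iff its `p`-socle is finite. -/
def HasFinitePRank (p : ℕ) (A : Type v) [CommGroup A] : Prop :=
  {a : A | a ^ p = 1}.Finite

/-- `G` has finite abelian section rank: every abelian section of `G` has finite
torsion-free rank and finite `p`-rank for every prime `p`. -/
def IsFAR (G : Type u) [Group G] : Prop :=
  ∀ (H : Subgroup G) (A : Type u) [CommGroup A] (φ : H →* A), Surjective φ →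
    HasFiniteTorsionFreeRank A ∧ ∀ p : ℕ, p.Prime → HasFinitePRank p A

/-- The Prüfer `p`-group `C_{p^∞}`: the subgroup of `p`-power order elements of `ℚ/ℤ`. -/
def pruferSubgroup (p : ℕ) : AddSubgroup (AddCircle (1 : ℚ)) where
  carrier := {x | ∃ n : ℕ, p ^ n • x = 0}
  zero_mem' := ⟨0, smul_zero _⟩
  add_mem' := by
    rintro a b ⟨m, hm⟩ ⟨n, hn⟩
    refine ⟨m + n, ?_⟩
    have ha : p ^ (m + n) • a = 0 := by rw [pow_add, mul_comm, mul_smul, hm, smul_zero]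
    have hb : p ^ (m + n) • b = 0 := by rw [pow_add, mul_smul, hn, smul_zero]
    rw [smul_add, ha, hb, add_zero]
  neg_mem' := by
    rintro a ⟨m, hm⟩
    exact ⟨m, by rw [smul_neg, hm, neg_zero]⟩

/-- `G` has a subgroup isomorphic to the Prüfer `p`-group `C_{p^∞}`. -/
def HasPruferSubgroup (p : ℕ) (G : Type u) [Group G] : Prop :=
  ∃ H : Subgroup G, Nonempty (H ≃* Multiplicative (pruferSubgroup p))

/-- `G` has a section (quotient of a subgroup) isomorphic to the Prüfer `p`-group, i.e.
`p ∈ spec G`. -/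
def HasPruferSection (p : ℕ) (G : Type u) [Group G] : Prop :=
  ∃ (H : Subgroup G) (φ : H →* Multiplicative (pruferSubgroup p)), Surjective φ

/-- `H ≤_t G`: `H` is topologically embedded in `G`, i.e. the profinite topology of `G`
induces the full profinite topology on `H`. -/
def TopEmbedded {G : Type u} [Group G] (H : Subgroup G) : Prop :=
  ∀ K : Subgroup H, K.Normal → K.FiniteIndex →
    ∃ L : Subgroup G, L.Normal ∧ L.FiniteIndex ∧ L.subgroupOf H ≤ K

/-- `H ≤_{t(p)} G`: `H` is topologically `p`-embedded in `G`, i.e. the pro-`p` topology of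
`G` induces the full pro-`p` topology on `H`. -/
def TopPEmbedded (p : ℕ) {G : Type u} [Group G] (H : Subgroup G) : Prop :=
  ∀ K : Subgroup H, K.Normal → (∃ k, K.index = p ^ k) →
    ∃ L : Subgroup G, L.Normal ∧ (∃ k, L.index = p ^ k) ∧ L.subgroupOf H ≤ K

/-- The pro-`p` topology on `G` is homogeneous: every subgroup of `G` is topologically
`p`-embedded in `G`. -/
def PHomogeneous (p : ℕ) (G : Type u) [Group G] : Prop :=
  ∀ H : Subgroup G, TopPEmbedded p H

/-- The `p`-residual of `G`: the kernel of the pro-`p` completion map, i.e. the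
intersection of all normal subgroups of finite `p`-power index. -/
def pResidual (p : ℕ) (G : Type u) [Group G] : Subgroup G :=
  ⨅ (N : Subgroup G) (_ : N.Normal) (_ : ∃ k, N.index = p ^ k), N

/-- A `p'`-group: every element has finite order coprime to `p`. -/
def IsPPrimeGroup (p : ℕ) (G : Type u) [Group G] : Prop :=
  ∀ g : G, IsOfFinOrder g ∧ Nat.Coprime (orderOf g) p

/-- The profinite topology on `G`, with the cosets of the normal subgroups of finite index
as basic open sets. -/
def profiniteTopology (G : Type u) [Group G] : TopologicalSpace G :=
  ⨅ (N : Subgroup G) (_ : N.Normal) (_ : N.FiniteIndex),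
    TopologicalSpace.induced (QuotientGroup.mk (s := N)) ⊥

lemma normal_of_le_center {G : Type u} [Group G] {A : Subgroup G}
    (hA : A ≤ Subgroup.center G) : A.Normal :=
  ⟨fun a ha g => by
    have hc := (Subgroup.mem_center_iff.mp (hA ha)) g
    have : g * a * g⁻¹ = a := by rw [hc]; group
    rwa [this]⟩

instance instCoeFunMulAddAut {M : Type*} [AddCommGroup M] :
    CoeFun (Multiplicative (AddAut M)) (fun _ => M → M) :=
  ⟨fun a => ⇑(Multiplicative.toAdd a : AddAut M)⟩

lemma toAdd_mul_apply' {M : Type*} [AddCommGroup M] (a b : Multiplicative (AddAut M)) (m : M) :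
    Multiplicative.toAdd (a * b) m = Multiplicative.toAdd a (Multiplicative.toAdd b m) := rfl

lemma toAdd_one_apply' {M : Type*} [AddCommGroup M] (m : M) :
    Multiplicative.toAdd (1 : Multiplicative (AddAut M)) m = m := rfl

/-! ### Auxiliary machinery for Weigel's lemma -/

namespace Weigel

variable {X Y : Type*} {M : Type*} [AddCommGroup M]

lemma fapp {n : ℕ} (x : Fin n → X) {a b : ℕ} {ha : a < n} {hb : b < n} (h : a = b) :
    x ⟨a, ha⟩ = x ⟨b, hb⟩ := by subst h; rfl

def skipF {n : ℕ} (i : ℕ) (x : Fin (n+2) → X) : Fin (n+1) → X :=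
  fun j => if j.1 < i then x ⟨j.1, by omega⟩ else x ⟨j.1+1, by omega⟩

def dH {n : ℕ} (F : (Fin (n+1) → X) → M) : (Fin (n+2) → X) → M :=
  fun x => ∑ i ∈ Finset.range (n+2), (-1:ℤ)^i • F (skipF i x)

def mixF (α β : X → Y) {n : ℕ} (l : ℕ) (x : Fin (n+1) → X) : Fin (n+2) → Y :=
  fun j => if j.1 ≤ l then α (x ⟨min j.1 n, by omega⟩) else β (x ⟨j.1-1, by omega⟩)

def hmt (α β : X → Y) {n : ℕ} (F : (Fin (n+2) → Y) → M) : (Fin (n+1) → X) → M :=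
  fun x => ∑ l ∈ Finset.range (n+1), (-1:ℤ)^l • F (mixF α β l x)

def pureF (α β : X → Y) {n : ℕ} (t : ℕ) (x : Fin (n+1) → X) : Fin (n+1) → Y :=
  fun j => if j.1 < t then α (x j) else β (x j)

lemma skip_mix_lt (α β : X → Y) {n : ℕ} {i l : ℕ} (hi : i < l) (hl : l ≤ n+1)
    (x : Fin (n+2) → X) :
    skipF i (mixF α β l x) = mixF α β (l-1) (skipF i x) := by
  funext j
  rcases j with ⟨j, hj⟩
  simp only [skipF, mixF]
  split_ifs <;>
    first
      | exact congrArg α (fapp x (by omega))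
      | exact congrArg β (fapp x (by omega))
      | omega

lemma skip_mix_gt (α β : X → Y) {n : ℕ} {i l : ℕ} (hi : l+1 < i) (hi2 : i ≤ n+2)
    (x : Fin (n+2) → X) :
    skipF i (mixF α β l x) = mixF α β l (skipF (i-1) x) := by
  funext j
  rcases j with ⟨j, hj⟩
  simp only [skipF, mixF]
  split_ifs <;>
    first
      | exact congrArg α (fapp x (by omega))
      | exact congrArg β (fapp x (by omega))
      | omega

lemma skip_mix_self (α β : X → Y) {n : ℕ} {l : ℕ} (hl : l ≤ n+1)
    (x : Fin (n+2) → X) :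
    skipF l (mixF α β l x) = pureF α β l x := by
  funext j
  rcases j with ⟨j, hj⟩
  simp only [skipF, mixF, pureF]
  split_ifs <;>
    first
      | exact congrArg α (fapp x (by omega))
      | exact congrArg β (fapp x (by omega))
      | omega

lemma skip_mix_succ (α β : X → Y) {n : ℕ} {l : ℕ} (hl : l ≤ n+1)
    (x : Fin (n+2) → X) :
    skipF (l+1) (mixF α β l x) = pureF α β (l+1) x := by
  funext j
  rcases j with ⟨j, hj⟩
  simp only [skipF, mixF, pureF]
  split_ifs <;>
    first
      | exact congrArg α (fapp x (by omega))
      | exact congrArg β (fapp x (by omega))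
      | omega

lemma pureF_zero (α β : X → Y) {n : ℕ} (x : Fin (n+1) → X) :
    pureF α β 0 x = fun k => β (x k) := by
  funext j; simp [pureF]

lemma pureF_top (α β : X → Y) {n : ℕ} (x : Fin (n+1) → X) :
    pureF α β (n+1) x = fun k => α (x k) := by
  funext j; simp [pureF, j.isLt]

lemma prism (α β : X → Y) {n : ℕ} (F : (Fin (n+2) → Y) → M) (x : Fin (n+2) → X) :
    dH (hmt α β F) x + hmt α β (dH F) x
      = F (fun k => β (x k)) - F (fun k => α (x k)) := by
  have hLHS1 : dH (hmt α β F) x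
      = ∑ i ∈ Finset.range (n+2), ∑ l ∈ Finset.range (n+1),
          (-1:ℤ)^(i+l) • F (mixF α β l (skipF i x)) := by
    simp only [dH, hmt, Finset.smul_sum, smul_smul, ← pow_add]
  have hT : ∀ l ∈ Finset.range (n+2),
      (-1:ℤ)^l • dH F (mixF α β l x)
        = -(∑ i ∈ Finset.range l, (-1:ℤ)^(i+(l-1)) • F (mixF α β (l-1) (skipF i x)))
          + ((F (pureF α β l x) - F (pureF α β (l+1) x))
          + -(∑ i ∈ Finset.Ico (l+1) (n+2), (-1:ℤ)^(i+l) • F (mixF α β l (skipF i x)))) := by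
    intro l hl
    rw [Finset.mem_range] at hl
    have hln : l ≤ n + 1 := by omega
    have e1 : dH F (mixF α β l x)
        = ((∑ i ∈ Finset.range l, (-1:ℤ)^i • F (skipF i (mixF α β l x))
            + (-1:ℤ)^l • F (skipF l (mixF α β l x)))
            + (-1:ℤ)^(l+1) • F (skipF (l+1) (mixF α β l x)))
          + ∑ i ∈ Finset.Ico (l+2) (n+3), (-1:ℤ)^i • F (skipF i (mixF α β l x)) := by
      simp only [dH]
      rw [Finset.range_eq_Ico,
        ← Finset.sum_Ico_consecutive _ (by omega : 0 ≤ l+2) (by omega : l+2 ≤ n+3),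
        ← Finset.range_eq_Ico, Finset.sum_range_succ, Finset.sum_range_succ]
    rw [e1, skip_mix_self α β hln x, skip_mix_succ α β hln x]
    rw [smul_add, smul_add, smul_add, Finset.smul_sum, Finset.smul_sum]
    have hP1 : ∑ i ∈ Finset.range l,
        (-1:ℤ)^l • ((-1:ℤ)^i • F (skipF i (mixF α β l x)))
        = -(∑ i ∈ Finset.range l, (-1:ℤ)^(i+(l-1)) • F (mixF α β (l-1) (skipF i x))) := by
      rw [← Finset.sum_neg_distrib]
      refine Finset.sum_congr rfl fun i hi => ?_
      rw [Finset.mem_range] at hi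
      rw [skip_mix_lt α β hi hln x, smul_smul, ← pow_add,
        show l + i = (i+(l-1))+1 by omega, pow_succ]
      simp [neg_smul]
    have hP2 : (-1:ℤ)^l • ((-1:ℤ)^l • F (pureF α β l x)) = F (pureF α β l x) := by
      rw [smul_smul, ← pow_add, Even.neg_one_pow ⟨l, by ring⟩, one_smul]
    have hP3 : (-1:ℤ)^l • ((-1:ℤ)^(l+1) • F (pureF α β (l+1) x))
        = -F (pureF α β (l+1) x) := by
      rw [smul_smul, ← pow_add, Odd.neg_one_pow ⟨l, by ring⟩, neg_one_smul]
    have hP4 : ∑ i ∈ Finset.Ico (l+2) (n+3),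
        (-1:ℤ)^l • ((-1:ℤ)^i • F (skipF i (mixF α β l x)))
        = -(∑ i ∈ Finset.Ico (l+1) (n+2), (-1:ℤ)^(i+l) • F (mixF α β l (skipF i x))) := by
      rw [← Finset.sum_neg_distrib, Finset.sum_Ico_eq_sum_range,
        Finset.sum_Ico_eq_sum_range, show n+3-(l+2) = n+2-(l+1) by omega]
      refine Finset.sum_congr rfl fun k hk => ?_
      rw [Finset.mem_range] at hk
      rw [skip_mix_gt α β (by omega) (by omega) x, show l+2+k-1 = l+1+k by omega,
        smul_smul, ← pow_add, show l + (l+2+k) = ((l+1+k)+l)+1 by omega, pow_succ]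
      simp [neg_smul]
    rw [hP1, hP2, hP3, hP4]
    abel
  have hLHS2 : hmt α β (dH F) x
      = -(∑ l ∈ Finset.range (n+2), ∑ i ∈ Finset.range l,
            (-1:ℤ)^(i+(l-1)) • F (mixF α β (l-1) (skipF i x)))
        + ((F (pureF α β 0 x) - F (pureF α β (n+2) x))
        + -(∑ l ∈ Finset.range (n+2), ∑ i ∈ Finset.Ico (l+1) (n+2),
            (-1:ℤ)^(i+l) • F (mixF α β l (skipF i x)))) := by
    show ∑ l ∈ Finset.range (n+2), (-1:ℤ)^l • dH F (mixF α β l x) = _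
    rw [Finset.sum_congr rfl hT, Finset.sum_add_distrib, Finset.sum_add_distrib,
      Finset.sum_neg_distrib, Finset.sum_neg_distrib,
      Finset.sum_range_sub' (fun l => F (pureF α β l x))]
  have hcomb : (∑ l ∈ Finset.range (n+2), ∑ i ∈ Finset.range l,
          (-1:ℤ)^(i+(l-1)) • F (mixF α β (l-1) (skipF i x)))
        + (∑ l ∈ Finset.range (n+2), ∑ i ∈ Finset.Ico (l+1) (n+2),
            (-1:ℤ)^(i+l) • F (mixF α β l (skipF i x)))
      = dH (hmt α β F) x := by
    rw [hLHS1]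
    rw [Finset.sum_range_succ' (fun l => ∑ i ∈ Finset.range l,
        (-1:ℤ)^(i+(l-1)) • F (mixF α β (l-1) (skipF i x))) (n+1)]
    simp only [Finset.range_zero, Finset.sum_empty, add_zero, Nat.add_sub_cancel]
    rw [Finset.sum_range_succ (fun l => ∑ i ∈ Finset.Ico (l+1) (n+2),
        (-1:ℤ)^(i+l) • F (mixF α β l (skipF i x))) (n+1)]
    simp only [Finset.Ico_self, Finset.sum_empty, add_zero]
    rw [← Finset.sum_add_distrib]
    rw [Finset.sum_congr rfl (fun l hl => ?_), Finset.sum_comm]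
    rw [Finset.mem_range] at hl
    rw [Finset.range_eq_Ico, Finset.range_eq_Ico]
    exact Finset.sum_Ico_consecutive _ (by omega : (0:ℕ) ≤ l+1) (by omega : l+1 ≤ n+2)
  rw [hLHS2, ← hcomb, pureF_zero, pureF_top]
  abel

end Weigel

namespace Weigel

section Bridge

variable {Γ : Type*} [Group Γ] {M : Type*} [AddCommGroup M]

lemma fappF {m : ℕ} {X : Type*} (x : Fin m → X) (a b : Fin m) (h : a.1 = b.1) : x a = x b :=
  congrArg x (Fin.ext h)

/-- From inhomogeneous to homogeneous cochains. -/
def toH (ρ : Γ →* Multiplicative (AddAut M)) {n : ℕ} (c : (Fin n → Γ) → M) : (Fin (n+1) → Γ) → M :=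
  fun x => ρ (x 0) (c (fun i : Fin n => (x i.castSucc)⁻¹ * x i.succ))

/-- From homogeneous to inhomogeneous cochains. -/
def toI {n : ℕ} (f : (Fin (n+1) → Γ) → M) : (Fin n → Γ) → M :=
  fun g => f (Fin.partialProd g)

/-- Invariance of a homogeneous cochain. -/
def IsInv (ρ : Γ →* Multiplicative (AddAut M)) {n : ℕ} (f : (Fin (n+1) → Γ) → M) : Prop :=
  ∀ (g : Γ) (x : Fin (n+1) → Γ), f (fun k => g * x k) = ρ g (f x)

lemma toI_toH (ρ : Γ →* Multiplicative (AddAut M)) {n : ℕ} (c : (Fin n → Γ) → M) : toI (toH ρ c) = c := by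
  funext g
  show ρ (Fin.partialProd g 0) (c _) = c g
  rw [Fin.partialProd_zero, map_one,
    show (fun i : Fin n => (Fin.partialProd g i.castSucc)⁻¹ * Fin.partialProd g i.succ) = g
      from funext fun i => Fin.partialProd_right_inv g i]
  rfl

lemma toH_inv (ρ : Γ →* Multiplicative (AddAut M)) {n : ℕ} (c : (Fin n → Γ) → M) : IsInv ρ (toH ρ c) := by
  intro g x
  have hdiff : (fun i : Fin n => ((fun k => g * x k) i.castSucc)⁻¹ * ((fun k => g * x k) i.succ))
      = fun i => (x i.castSucc)⁻¹ * x i.succ := by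
    funext i
    show (g * x i.castSucc)⁻¹ * (g * x i.succ) = _
    simp [mul_inv_rev, mul_assoc]
  show ρ ((fun k => g * x k) 0)
      (c fun i => ((fun k => g * x k) i.castSucc)⁻¹ * ((fun k => g * x k) i.succ)) = _
  rw [hdiff]
  show ρ (g * x 0) _ = _
  rw [map_mul, toAdd_mul_apply']
  rfl

lemma toH_toI (ρ : Γ →* Multiplicative (AddAut M)) {n : ℕ} {f : (Fin (n+1) → Γ) → M} (hf : IsInv ρ f) :
    toH ρ (toI f) = f := by
  funext x
  show ρ (x 0) (f (Fin.partialProd fun i : Fin n => (x i.castSucc)⁻¹ * x i.succ)) = f x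
  have hpp : Fin.partialProd (fun i : Fin n => (x i.castSucc)⁻¹ * x i.succ)
      = fun k => (x 0)⁻¹ * x k := by
    funext k
    have h := congrFun (Fin.partialProd_left_inv x) k
    simp only [Pi.smul_apply, smul_eq_mul, Fin.coe_eq_castSucc] at h
    exact eq_inv_mul_iff_mul_eq.mpr h
  rw [hpp, hf (x 0)⁻¹ x, map_inv]
  simp

lemma toH_zero (ρ : Γ →* Multiplicative (AddAut M)) {n : ℕ} : toH ρ (0 : (Fin n → Γ) → M) = 0 := by
  funext x; show ρ (x 0) 0 = 0; exact map_zero _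

/-- The key bridge identity: `toH` intertwines the inhomogeneous differential `cochainD`
with the homogeneous differential `dH`. -/
lemma toH_d (ρ : Γ →* Multiplicative (AddAut M)) {n : ℕ} (c : (Fin n → Γ) → M) :
    toH ρ (cochainD ρ n c) = dH (toH ρ c) := by
  funext x
  set D : Fin (n+1) → Γ := fun i => (x i.castSucc)⁻¹ * x i.succ with hD
  show ρ (x 0) (cochainD ρ n c D) = dH (toH ρ c) x
  have hcd : cochainD ρ n c D
      = ρ (D 0) (c fun i => D i.succ)
        + ∑ j : Fin (n + 1), (-1 : ℤ) ^ ((j : ℕ) + 1) • c (Fin.contractNth j (· * ·) D) := rfl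
  rw [hcd, map_add, map_sum]
  have hRHS : dH (toH ρ c) x
      = (∑ i ∈ Finset.range (n+1), (fun i : ℕ => (-1:ℤ)^(i+1) • toH ρ c (skipF (i+1) x)) i)
        + toH ρ c (skipF 0 x) := by
    show ∑ i ∈ Finset.range (n+2), (-1:ℤ)^i • toH ρ c (skipF i x) = _
    rw [Finset.sum_range_succ' (fun i => (-1:ℤ)^i • toH ρ c (skipF i x)) (n+1)]
    simp
  rw [hRHS, ← Fin.sum_univ_eq_sum_range (fun i : ℕ => (-1:ℤ)^(i+1) • toH ρ c (skipF (i+1) x)) (n+1)]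
  rw [add_comm]
  congr 1
  · -- the sum
    refine Finset.sum_congr rfl fun j _ => ?_
    rw [map_zsmul]
    congr 1
    show ρ (x 0) (c (Fin.contractNth j (· * ·) D)) = toH ρ c (skipF (j.1+1) x)
    have h0 : skipF (j.1+1) x 0 = x 0 := by
      show (if (0:ℕ) < j.1+1 then x ⟨0, by omega⟩ else _) = x 0
      rw [if_pos (by omega)]
      exact fappF x _ _ rfl
    show _ = ρ (skipF (j.1+1) x 0)
      (c fun k : Fin n => ((skipF (j.1+1) x) k.castSucc)⁻¹ * skipF (j.1+1) x k.succ)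
    rw [h0]
    refine congrArg _ (congrArg c (funext fun k => ?_))
    simp only [skipF]
    rcases lt_trichotomy (k : ℕ) (j : ℕ) with hk | hk | hk
    · rw [Fin.contractNth_apply_of_lt _ _ _ _ hk]
      show (x (k.castSucc).castSucc)⁻¹ * x (k.castSucc).succ = _
      rw [if_pos (by simp; omega), if_pos (by simp [Fin.val_succ]; omega)]
      exact congrArg₂ (fun a b => a⁻¹ * b)
        (fappF x _ _ (by simp)) (fappF x _ _ (by simp))
    · rw [Fin.contractNth_apply_of_eq _ _ _ _ hk]
      show ((x (k.castSucc).castSucc)⁻¹ * x (k.castSucc).succ)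
          * ((x (k.succ).castSucc)⁻¹ * x (k.succ).succ) = _
      rw [if_pos (by simp; omega), if_neg (by simp [Fin.val_succ]; omega)]
      rw [fappF x (k.castSucc).succ (k.succ).castSucc (by simp)]
      rw [mul_assoc, mul_inv_cancel_left]
      exact congrArg₂ (fun a b => a⁻¹ * b)
        (fappF x _ _ (by simp)) (fappF x _ _ (by simp))
    · rw [Fin.contractNth_apply_of_gt _ _ _ _ hk]
      show (x (k.succ).castSucc)⁻¹ * x (k.succ).succ = _
      rw [if_neg (by simp; omega), if_neg (by simp [Fin.val_succ]; omega)]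
      exact congrArg₂ (fun a b => a⁻¹ * b)
        (fappF x _ _ (by simp)) (fappF x _ _ (by simp))
  · -- first terms
    show ρ (x 0) (ρ (D 0) (c fun i => D i.succ)) = toH ρ c (skipF 0 x)
    rw [← toAdd_mul_apply', ← map_mul]
    show ρ (x 0 * ((x (Fin.castSucc 0))⁻¹ * x (Fin.succ 0))) (c fun i => D i.succ)
        = ρ (skipF 0 x 0) (c fun i : Fin n => ((skipF 0 x) i.castSucc)⁻¹ * skipF 0 x i.succ)
    have h1 : x 0 * ((x (Fin.castSucc 0))⁻¹ * x (Fin.succ 0)) = skipF 0 x 0 := by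
      show _ = if (0:ℕ) < 0 then _ else x ⟨0+1, by omega⟩
      rw [if_neg (by omega), show Fin.castSucc 0 = (0 : Fin (n+2)) from rfl,
        mul_inv_cancel_left]
      exact fappF x _ _ rfl
    rw [h1]
    refine congrArg _ (congrArg c (funext fun i => ?_))
    show (x (i.succ).castSucc)⁻¹ * x (i.succ).succ = _
    simp only [skipF]
    rw [if_neg (by omega), if_neg (by omega)]
    exact congrArg₂ (fun a b => a⁻¹ * b)
      (fappF x _ _ (by simp)) (fappF x _ _ (by simp))


/-- Inverse bridge identity, for invariant cochains. -/
lemma toI_d (ρ : Γ →* Multiplicative (AddAut M)) {n : ℕ} {f : (Fin (n+1) → Γ) → M} (hf : IsInv ρ f) :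
    cochainD ρ n (toI f) = toI (dH f) := by
  have h1 : toH ρ (cochainD ρ n (toI f)) = dH f := by
    rw [toH_d, toH_toI ρ hf]
  calc cochainD ρ n (toI f) = toI (toH ρ (cochainD ρ n (toI f))) := (toI_toH ρ _).symm
    _ = toI (dH f) := by rw [h1]

end Bridge

end Weigel

namespace Weigel

section Norm

variable {Γ Δ : Type*} [Group Γ] [Group Δ] {M : Type*} [AddCommGroup M]

lemma skipF_comp {X Y : Type*} (φ : X → Y) {n : ℕ} (i : ℕ) (x : Fin (n+2) → X) :
    skipF i (fun k => φ (x k)) = fun k => φ (skipF i x k) := by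
  funext k; simp only [skipF]; split_ifs <;> rfl

variable (ρ : Γ →* Multiplicative (AddAut M)) (j : Δ →* Γ) (κ : Γ → Δ) {ι : Type*} [Fintype ι] (T : ι → Γ)

/-- The corestriction norm on homogeneous cochains (including the retraction `κ`). -/
def nmK {n : ℕ} (f : (Fin (n+1) → Δ) → M) : (Fin (n+1) → Γ) → M :=
  fun x => ∑ i : ι, ρ (T i) (f (fun k => κ ((T i)⁻¹ * x k)))

/-- The plain norm on homogeneous cochains. -/
def nm0 {n : ℕ} (f : (Fin (n+1) → Γ) → M) : (Fin (n+1) → Γ) → M :=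
  fun x => ∑ i : ι, ρ (T i) (f (fun k => (T i)⁻¹ * x k))

lemma nmK_dH {n : ℕ} (f : (Fin (n+1) → Δ) → M) :
    nmK ρ κ T (dH f) = dH (nmK ρ κ T f) := by
  funext x
  show ∑ i : ι, ρ (T i) (dH f (fun k => κ ((T i)⁻¹ * x k)))
      = ∑ l ∈ Finset.range (n+2), (-1:ℤ)^l • nmK ρ κ T f (skipF l x)
  have h1 : ∀ i : ι, ρ (T i) (dH f (fun k => κ ((T i)⁻¹ * x k)))
      = ∑ l ∈ Finset.range (n+2),
          (-1:ℤ)^l • ρ (T i) (f (fun k => κ ((T i)⁻¹ * skipF l x k))) := by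
    intro i
    show ρ (T i) (∑ l ∈ Finset.range (n+2),
        (-1:ℤ)^l • f (skipF l fun k => κ ((T i)⁻¹ * x k))) = _
    rw [map_sum]
    refine Finset.sum_congr rfl fun l _ => ?_
    rw [map_zsmul]
    congr 2
    exact congrArg f (skipF_comp (fun g => κ ((T i)⁻¹ * g)) l x)
  rw [Finset.sum_congr rfl fun i _ => h1 i, Finset.sum_comm]
  refine Finset.sum_congr rfl fun l _ => ?_
  rw [← Finset.smul_sum]
  rfl

lemma nm0_dH {n : ℕ} (f : (Fin (n+1) → Γ) → M) :
    nm0 ρ T (dH f) = dH (nm0 ρ T f) := by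
  funext x
  show ∑ i : ι, ρ (T i) (dH f (fun k => (T i)⁻¹ * x k))
      = ∑ l ∈ Finset.range (n+2), (-1:ℤ)^l • nm0 ρ T f (skipF l x)
  have h1 : ∀ i : ι, ρ (T i) (dH f (fun k => (T i)⁻¹ * x k))
      = ∑ l ∈ Finset.range (n+2),
          (-1:ℤ)^l • ρ (T i) (f (fun k => (T i)⁻¹ * skipF l x k)) := by
    intro i
    show ρ (T i) (∑ l ∈ Finset.range (n+2),
        (-1:ℤ)^l • f (skipF l fun k => (T i)⁻¹ * x k)) = _
    rw [map_sum]
    refine Finset.sum_congr rfl fun l _ => ?_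
    rw [map_zsmul]
    congr 2
    exact congrArg f (skipF_comp (fun g => (T i)⁻¹ * g) l x)
  rw [Finset.sum_congr rfl fun i _ => h1 i, Finset.sum_comm]
  refine Finset.sum_congr rfl fun l _ => ?_
  rw [← Finset.smul_sum]
  rfl

variable (c : Γ → ι)

lemma transversal_inv (hT : ∀ g : Γ, ∃ δ : Δ, g = T (c g) * j δ)
    (hc : ∀ (i : ι) (δ : Δ), c (T i * j δ) = i) (g : Γ) (i : ι) :
    c (g⁻¹ * T (c (g * T i))) = i := by
  obtain ⟨δ, hδ⟩ := hT (g * T i)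
  have h2 : g⁻¹ * T (c (g * T i)) = T i * j δ⁻¹ := by
    have h3 : T (c (g * T i)) = g * T i * (j δ)⁻¹ := by
      rw [eq_mul_inv_iff_mul_eq]; exact hδ.symm
    rw [h3, map_inv]; group
  rw [h2, hc]

lemma nmK_inv (hκ : ∀ (δ : Δ) (g : Γ), κ (j δ * g) = δ * κ g)
    (hT : ∀ g : Γ, ∃ δ : Δ, g = T (c g) * j δ)
    (hc : ∀ (i : ι) (δ : Δ), c (T i * j δ) = i)
    {n : ℕ} {f : (Fin (n+1) → Δ) → M}
    (hf : ∀ (δ : Δ) (w : Fin (n+1) → Δ), f (fun k => δ * w k) = ρ (j δ) (f w)) :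
    IsInv ρ (nmK ρ κ T f) := by
  intro g x
  have hbij : Function.Bijective (fun i => c (g * T i)) := by
    apply Function.bijective_iff_has_inverse.mpr
    refine ⟨fun i => c (g⁻¹ * T i), fun i => transversal_inv j T c hT hc g i, fun i => ?_⟩
    have := transversal_inv j T c hT hc g⁻¹ i
    simpa using this
  show nmK ρ κ T f (fun k => g * x k) = ρ g (nmK ρ κ T f x)
  show ∑ i : ι, ρ (T i) (f fun k => κ ((T i)⁻¹ * (fun k' => g * x k') k))
      = ρ g (∑ i : ι, ρ (T i) (f fun k => κ ((T i)⁻¹ * x k)))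
  rw [map_sum,
    ← Function.Bijective.sum_comp hbij
      (fun i => ρ (T i) (f fun k => κ ((T i)⁻¹ * (fun k' => g * x k') k)))]
  refine Finset.sum_congr rfl fun i _ => ?_
  obtain ⟨δ, hδ⟩ := hT (g * T i)
  have h3 : ∀ k, (T (c (g * T i)))⁻¹ * (g * x k) = j δ * ((T i)⁻¹ * x k) := by
    intro k
    have h4 : (T (c (g * T i)))⁻¹ * g = j δ * (T i)⁻¹ := by
      have h5 : T (c (g * T i)) = g * T i * (j δ)⁻¹ := by
        rw [eq_mul_inv_iff_mul_eq]; exact hδ.symm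
      rw [h5]; group
    rw [← mul_assoc, h4, mul_assoc]
  rw [show (fun k => κ ((T (c (g * T i)))⁻¹ * (fun k' => g * x k') k))
      = fun k => δ * κ ((T i)⁻¹ * x k) from funext fun k => by
        show κ ((T (c (g * T i)))⁻¹ * (g * x k)) = _
        rw [h3 k, hκ]]
  rw [hf δ, ← toAdd_mul_apply', ← map_mul, ← hδ, map_mul, toAdd_mul_apply']

lemma nm0_inv (hT : ∀ g : Γ, ∃ δ : Δ, g = T (c g) * j δ)
    (hc : ∀ (i : ι) (δ : Δ), c (T i * j δ) = i)
    {n : ℕ} {f : (Fin (n+1) → Γ) → M}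
    (hf : ∀ (δ : Δ) (w : Fin (n+1) → Γ), f (fun k => j δ * w k) = ρ (j δ) (f w)) :
    IsInv ρ (nm0 ρ T f) := by
  intro g x
  have hbij : Function.Bijective (fun i => c (g * T i)) := by
    apply Function.bijective_iff_has_inverse.mpr
    refine ⟨fun i => c (g⁻¹ * T i), fun i => transversal_inv j T c hT hc g i, fun i => ?_⟩
    have := transversal_inv j T c hT hc g⁻¹ i
    simpa using this
  show ∑ i : ι, ρ (T i) (f fun k => (T i)⁻¹ * (fun k' => g * x k') k)
      = ρ g (∑ i : ι, ρ (T i) (f fun k => (T i)⁻¹ * x k))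
  rw [map_sum,
    ← Function.Bijective.sum_comp hbij
      (fun i => ρ (T i) (f fun k => (T i)⁻¹ * (fun k' => g * x k') k))]
  refine Finset.sum_congr rfl fun i _ => ?_
  obtain ⟨δ, hδ⟩ := hT (g * T i)
  have h3 : ∀ k, (T (c (g * T i)))⁻¹ * (g * x k) = j δ * ((T i)⁻¹ * x k) := by
    intro k
    have h4 : (T (c (g * T i)))⁻¹ * g = j δ * (T i)⁻¹ := by
      have h5 : T (c (g * T i)) = g * T i * (j δ)⁻¹ := by
        rw [eq_mul_inv_iff_mul_eq]; exact hδ.symm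
      rw [h5]; group
    rw [← mul_assoc, h4, mul_assoc]
  rw [show (fun k => (T (c (g * T i)))⁻¹ * (fun k' => g * x k') k)
      = fun k => j δ * ((T i)⁻¹ * x k) from funext fun k => h3 k]
  rw [hf δ, ← toAdd_mul_apply', ← map_mul, ← hδ, map_mul, toAdd_mul_apply']

lemma nm0_of_inv {n : ℕ} {f : (Fin (n+1) → Γ) → M} (hf : IsInv ρ f) :
    nm0 ρ T f = (Fintype.card ι) • f := by
  funext x
  show ∑ i : ι, ρ (T i) (f fun k => (T i)⁻¹ * x k) = (Fintype.card ι) • f x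
  have h1 : ∀ i : ι, ρ (T i) (f fun k => (T i)⁻¹ * x k) = f x := by
    intro i
    rw [hf (T i)⁻¹ x, map_inv]
    simp
  rw [Finset.sum_congr rfl fun i _ => h1 i, Finset.sum_const, Finset.card_univ]

lemma nm0_add {n : ℕ} (f g : (Fin (n+1) → Γ) → M) :
    nm0 ρ T (f + g) = nm0 ρ T f + nm0 ρ T g := by
  funext x
  show ∑ i : ι, ρ (T i) ((f + g) fun k => (T i)⁻¹ * x k) = _
  simp [Pi.add_apply, map_add, Finset.sum_add_distrib]
  rfl

lemma hmt_zero {X Y : Type*} (α β : X → Y) {n : ℕ} :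
    hmt α β (0 : ((Fin (n+2) → Y) → M)) = 0 := by
  funext x; simp [hmt]

lemma hmt_inv (hκ : ∀ (δ : Δ) (g : Γ), κ (j δ * g) = δ * κ g)
    {n : ℕ} {f : (Fin (n+2) → Γ) → M} (hf : IsInv ρ f) :
    ∀ (δ : Δ) (w : Fin (n+1) → Γ),
      hmt id (fun g => j (κ g)) f (fun k => j δ * w k)
        = ρ (j δ) (hmt id (fun g => j (κ g)) f w) := by
  intro δ w
  have hmix : ∀ l : ℕ, mixF id (fun g => j (κ g)) l (fun k => j δ * w k)
      = fun t => j δ * mixF id (fun g => j (κ g)) l w t := by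
    intro l
    funext t
    simp only [mixF]
    split_ifs
    · rfl
    · show j (κ (j δ * w _)) = j δ * j (κ (w _))
      rw [hκ, map_mul]
  show ∑ l ∈ Finset.range (n+1),
      (-1:ℤ)^l • f (mixF id (fun g => j (κ g)) l (fun k => j δ * w k))
    = ρ (j δ) (∑ l ∈ Finset.range (n+1), (-1:ℤ)^l • f (mixF id (fun g => j (κ g)) l w))
  rw [map_sum]
  refine Finset.sum_congr rfl fun l _ => ?_
  rw [map_zsmul, hmix l, hf (j δ)]

end Norm

end Weigel

namespace Weigel

section Cores

variable {M : Type v} [AddCommGroup M]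

/-- Transversal data for corestriction along a homomorphism `j : Δ →* Γ`. -/
structure CoresData (Γ Δ : Type u) [Group Γ] [Group Δ] (j : Δ →* Γ)
    (ι : Type u) [Fintype ι] where
  T : ι → Γ
  κ : Γ → Δ
  c : Γ → ι
  hκ : ∀ (δ : Δ) (g : Γ), κ (j δ * g) = δ * κ g
  hT : ∀ g : Γ, ∃ δ : Δ, g = T (c g) * j δ
  hc : ∀ (i : ι) (δ : Δ), c (T i * j δ) = i

variable {Γ Δ : Type u} [Group Γ] [Group Δ]
variable (ρ : Γ →* Multiplicative (AddAut M)) (ρΔ : Δ →* Multiplicative (AddAut M)) (j : Δ →* Γ)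
variable {ι : Type u} [Fintype ι]

/-- The corestriction map on inhomogeneous cochains. -/
def coresC (D : CoresData Γ Δ j ι) {n : ℕ} (cc : (Fin n → Δ) → M) : (Fin n → Γ) → M :=
  toI (nmK ρ D.κ D.T (toH ρΔ cc))

lemma toH_inv' (hcomp : ∀ δ, ρΔ δ = ρ (j δ)) {n : ℕ} (cc : (Fin n → Δ) → M) :
    ∀ (δ : Δ) (w : Fin (n+1) → Δ), toH ρΔ cc (fun k => δ * w k) = ρ (j δ) (toH ρΔ cc w) := by
  intro δ w
  rw [toH_inv ρΔ cc δ w, hcomp]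

lemma coresC_d (hcomp : ∀ δ, ρΔ δ = ρ (j δ)) (D : CoresData Γ Δ j ι) {n : ℕ}
    (cc : (Fin n → Δ) → M) :
    cochainD ρ n (coresC ρ ρΔ j D cc) = coresC ρ ρΔ j D (cochainD ρΔ n cc) := by
  have hNinv : IsInv ρ (nmK ρ D.κ D.T (toH ρΔ cc)) :=
    nmK_inv ρ j D.κ D.T D.c D.hκ D.hT D.hc (toH_inv' ρ ρΔ j hcomp cc)
  show cochainD ρ n (toI (nmK ρ D.κ D.T (toH ρΔ cc))) = _
  rw [toI_d ρ hNinv, ← nmK_dH, ← toH_d]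
  rfl

lemma coresC_add (D : CoresData Γ Δ j ι) {n : ℕ} (a b : (Fin n → Δ) → M) :
    coresC ρ ρΔ j D (a + b) = coresC ρ ρΔ j D a + coresC ρ ρΔ j D b := by
  funext g
  show nmK ρ D.κ D.T (toH ρΔ (a + b)) (Fin.partialProd g) = _
  have h1 : toH ρΔ (a + b) = toH ρΔ a + toH ρΔ b := by
    funext x
    show ρΔ (x 0) ((a + b) _) = ρΔ (x 0) (a _) + ρΔ (x 0) (b _)
    rw [Pi.add_apply, map_add]
  rw [h1]
  show ∑ i : ι, ρ (D.T i) ((toH ρΔ a + toH ρΔ b) _) = _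
  simp only [Pi.add_apply, map_add]
  rw [Finset.sum_add_distrib]
  rfl

/-- The corestriction as an additive homomorphism on cochains. -/
def coresCHom (D : CoresData Γ Δ j ι) (n : ℕ) :
    ((Fin n → Δ) → M) →+ ((Fin n → Γ) → M) :=
  AddMonoidHom.mk' (coresC ρ ρΔ j D) (coresC_add ρ ρΔ j D)

/-- The corestriction on cocycles. -/
def coresCocycle (hcomp : ∀ δ, ρΔ δ = ρ (j δ)) (D : CoresData Γ Δ j ι) (n : ℕ) :
    cocycleGroup ρΔ n →+ cocycleGroup ρ n :=
  AddMonoidHom.codRestrict ((coresCHom ρ ρΔ j D n).comp (cocycleGroup ρΔ n).subtype) _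
    (fun x => by
      have hx : cochainD ρΔ n x.1 = 0 := x.2
      show coresC ρ ρΔ j D x.1 ∈ (cochainD ρ n).ker
      rw [AddMonoidHom.mem_ker, coresC_d ρ ρΔ j hcomp D, hx]
      exact map_zero (coresCHom ρ ρΔ j D (n+1)))

/-- The corestriction on cohomology. -/
def coresMap (hcomp : ∀ δ, ρΔ δ = ρ (j δ)) (D : CoresData Γ Δ j ι) (n : ℕ) :
    groupCoh ρΔ n →+ groupCoh ρ n :=
  QuotientAddGroup.map _ _ (coresCocycle ρ ρΔ j hcomp D n)
    (by
      intro x hx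
      rw [AddSubgroup.mem_addSubgroupOf] at hx
      rw [AddSubgroup.mem_comap, AddSubgroup.mem_addSubgroupOf]
      match n, x, hx with
      | 0, x, hx =>
          have h0 : x.1 = 0 := hx
          show coresC ρ ρΔ j D x.1 ∈ (⊥ : AddSubgroup _)
          rw [h0, show coresC ρ ρΔ j D (0 : (Fin 0 → Δ) → M) = 0
            from map_zero (coresCHom ρ ρΔ j D 0)]
          exact AddSubgroup.mem_bot.mpr rfl
      | (m + 1), x, hx =>
          obtain ⟨b, hb⟩ := hx
          show coresC ρ ρΔ j D x.1 ∈ (cochainD ρ m).range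
          exact ⟨coresC ρ ρΔ j D b, by rw [coresC_d ρ ρΔ j hcomp D, hb]⟩)

lemma toH_precomp (hcomp : ∀ δ, ρΔ δ = ρ (j δ)) {n : ℕ} (cc : (Fin n → Γ) → M) :
    toH ρΔ (precompCochain j n cc) = fun w => toH ρ cc (fun k => j (w k)) := by
  funext w
  show ρΔ (w 0) (cc fun i => j ((w i.castSucc)⁻¹ * w i.succ)) = _
  rw [hcomp]
  show ρ (j (w 0)) _ = ρ ((fun k => j (w k)) 0) (cc fun i =>
    ((fun k => j (w k)) i.castSucc)⁻¹ * (fun k => j (w k)) i.succ)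
  congr 1
  refine congrArg cc (funext fun i => ?_)
  show j ((w i.castSucc)⁻¹ * w i.succ) = (j (w i.castSucc))⁻¹ * j (w i.succ)
  rw [map_mul, map_inv]

/-- Corestriction of a restricted cocycle equals multiplication by the index,
up to an explicit coboundary. -/
lemma coresC_res (hcomp : ∀ δ, ρΔ δ = ρ (j δ)) (D : CoresData Γ Δ j ι) {n : ℕ}
    (cc : (Fin n → Γ) → M) (hcc : cochainD ρ n cc = 0) :
    coresC ρ ρΔ j D (precompCochain j n cc) - (Fintype.card ι) • cc
      ∈ coboundaryGroup ρ n := by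
  match n, cc, hcc with
  | 0, cc, hcc =>
      have hconst : ∀ (γ : Γ) (w : Fin 0 → Γ), ρ γ (cc w) = cc w := by
        intro γ w
        have h3 : ∀ (w' : Fin 0 → Γ), cc w' = cc w := fun w' =>
          congrArg cc (funext fun i => i.elim0)
        have h2 : ρ ((fun _ : Fin 1 => γ) 0) (cc fun i : Fin 0 => (fun _ : Fin 1 => γ) i.succ)
            + ∑ j' : Fin 1, (-1 : ℤ) ^ ((j' : ℕ) + 1) •
              cc (Fin.contractNth j' (· * ·) fun _ : Fin 1 => γ) = 0 :=
          congrFun hcc (fun _ : Fin 1 => γ)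
        rw [Fin.sum_univ_one, h3, h3 (Fin.contractNth _ _ _)] at h2
        have h4 : ρ γ (cc w) + (-1 : ℤ) ^ ((((0 : Fin 1)) : ℕ) + 1) • cc w = 0 := h2
        simp only [Fin.val_zero, zero_add, pow_one, neg_one_zsmul] at h4
        exact add_neg_eq_zero.mp h4
      have hmain : coresC ρ ρΔ j D (precompCochain j 0 cc) = (Fintype.card ι) • cc := by
        funext g
        show nmK ρ D.κ D.T (toH ρΔ (precompCochain j 0 cc)) (Fin.partialProd g)
            = ((Fintype.card ι) • cc) g
        rw [toH_precomp ρ ρΔ j hcomp]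
        show ∑ i : ι, ρ (D.T i) (toH ρ cc
            (fun k => j (D.κ ((D.T i)⁻¹ * Fin.partialProd g k)))) = _
        have hterm : ∀ i : ι, ρ (D.T i) (toH ρ cc
            (fun k => j (D.κ ((D.T i)⁻¹ * Fin.partialProd g k)))) = cc g := by
          intro i
          have e1 : toH ρ cc (fun k => j (D.κ ((D.T i)⁻¹ * Fin.partialProd g k))) = cc g := by
            show ρ ((fun k => j (D.κ ((D.T i)⁻¹ * Fin.partialProd g k))) 0) (cc _) = cc g
            rw [hconst]
            exact congrArg cc (funext fun t => t.elim0)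
          rw [e1, hconst]
        rw [Finset.sum_congr rfl fun i _ => hterm i, Finset.sum_const, Finset.card_univ]
        rw [Pi.smul_apply]
      rw [hmain]
      show _ ∈ (⊥ : AddSubgroup _)
      rw [sub_self]
      exact AddSubgroup.mem_bot.mpr rfl
  | (m + 1), cc, hcc =>
      set B : Γ → Γ := fun g => j (D.κ g) with hB
      set f : (Fin (m+2) → Γ) → M := toH ρ cc with hf
      have hfinv : IsInv ρ f := toH_inv ρ cc
      have hdf : dH f = 0 := by
        rw [hf, ← toH_d, hcc, toH_zero]
      have hprism : ∀ x : Fin (m+2) → Γ,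
          f (fun k => B (x k)) = f x + dH (hmt id B f) x := by
        intro x
        have hp := prism id B f x
        rw [hdf, hmt_zero] at hp
        simp only [Pi.zero_apply, add_zero] at hp
        have hid : (fun k => id (x k)) = x := rfl
        rw [hid] at hp
        have h6 : f (fun k => B (x k)) - f x = dH (hmt id B f) x := hp.symm
        rw [sub_eq_iff_eq_add] at h6
        rw [h6, add_comm]
      have hF' : (fun y : Fin (m+2) → Γ => f (fun k => j (D.κ (y k))))
          = f + dH (hmt id B f) := by
        funext y
        exact hprism y
      have e0 : coresC ρ ρΔ j D (precompCochain j (m+1) cc)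
          = toI (nm0 ρ D.T (fun y : Fin (m+2) → Γ => f (fun k => j (D.κ (y k))))) := by
        show toI (nmK ρ D.κ D.T (toH ρΔ (precompCochain j (m+1) cc))) = _
        rw [toH_precomp ρ ρΔ j hcomp]
        rfl
      have hinv2 : IsInv ρ (nm0 ρ D.T (hmt id B f)) :=
        nm0_inv ρ j D.T D.c D.hT D.hc (hmt_inv ρ j D.κ D.hκ hfinv)
      have hmain : coresC ρ ρΔ j D (precompCochain j (m+1) cc)
          = (Fintype.card ι) • cc + cochainD ρ m (toI (nm0 ρ D.T (hmt id B f))) := by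
        rw [e0, hF', nm0_add, nm0_of_inv ρ D.T hfinv, nm0_dH]
        have e4 : toI ((Fintype.card ι) • f + dH (nm0 ρ D.T (hmt id B f)))
            = (Fintype.card ι) • toI f + toI (dH (nm0 ρ D.T (hmt id B f))) := rfl
        rw [e4, ← toI_d ρ hinv2]
        congr 1
        rw [hf, toI_toH]
      rw [hmain]
      show _ ∈ (cochainD ρ m).range
      rw [add_sub_cancel_left]
      exact ⟨toI (nm0 ρ D.T (hmt id B f)), rfl⟩

end Cores

end Weigel

namespace Weigel

section ClassLevel

variable {M : Type v} [AddCommGroup M]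
variable {Γ Δ : Type u} [Group Γ] [Group Δ]
variable (ρ : Γ →* Multiplicative (AddAut M)) (ρΔ : Δ →* Multiplicative (AddAut M)) (j : Δ →* Γ)
variable {ι : Type u} [Fintype ι]

/-- Corestriction-restriction formula on cohomology: `cores ∘ res = index • id`. -/
lemma coresMap_cohMap (hcomp : ∀ δ, ρΔ δ = ρ (j δ)) (D : CoresData Γ Δ j ι) (n : ℕ)
    (x : groupCoh ρ n) :
    coresMap ρ ρΔ j hcomp D n (cohMap j ρ ρΔ hcomp n x) = (Fintype.card ι) • x := by
  refine QuotientAddGroup.induction_on x fun z => ?_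
  have h1 : cohMap j ρ ρΔ hcomp n (QuotientAddGroup.mk z)
      = QuotientAddGroup.mk (cocycleMap j ρ ρΔ hcomp n z) := rfl
  have h2 : coresMap ρ ρΔ j hcomp D n (QuotientAddGroup.mk (cocycleMap j ρ ρΔ hcomp n z))
      = QuotientAddGroup.mk (coresCocycle ρ ρΔ j hcomp D n (cocycleMap j ρ ρΔ hcomp n z)) := rfl
  have h3 : (Fintype.card ι) • (QuotientAddGroup.mk z : groupCoh ρ n)
      = QuotientAddGroup.mk ((Fintype.card ι) • z) :=
    (map_nsmul (QuotientAddGroup.mk'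
      ((coboundaryGroup ρ n).addSubgroupOf (cocycleGroup ρ n))) (Fintype.card ι) z).symm
  rw [h1, h2]
  refine Eq.trans ?_ h3.symm
  refine QuotientAddGroup.eq.mpr ?_
  rw [AddSubgroup.mem_addSubgroupOf]
  have hz : cochainD ρ n z.1 = 0 := z.2
  have hmem := coresC_res ρ ρΔ j hcomp D z.1 hz
  have hval : ((-(coresCocycle ρ ρΔ j hcomp D n (cocycleMap j ρ ρΔ hcomp n z))
        + (Fintype.card ι) • z : cocycleGroup ρ n) : (Fin n → Γ) → M)
      = -(coresC ρ ρΔ j D (precompCochain j n z.1) - (Fintype.card ι) • z.1) := by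
    show -(coresC ρ ρΔ j D (precompCochain j n z.1)) + (Fintype.card ι) • z.1 = _
    rw [neg_sub]
    abel
  rw [hval]
  exact neg_mem hmem

lemma cohMap_comp {G1 G2 G3 : Type u} [Group G1] [Group G2] [Group G3]
    (f : G1 →* G2) (g : G2 →* G3) (ρ3 : G3 →* Multiplicative (AddAut M)) (ρ2 : G2 →* Multiplicative (AddAut M))
    (ρ1 : G1 →* Multiplicative (AddAut M)) (h2 : ∀ x, ρ2 x = ρ3 (g x)) (h1 : ∀ x, ρ1 x = ρ2 (f x))
    (h3 : ∀ x, ρ1 x = ρ3 (g (f x))) (n : ℕ) (z : groupCoh ρ3 n) :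
    cohMap f ρ2 ρ1 h1 n (cohMap g ρ3 ρ2 h2 n z) = cohMap (g.comp f) ρ3 ρ1 h3 n z := by
  refine QuotientAddGroup.induction_on z fun w => ?_
  rfl

lemma cohMap_congr {G1 G2 : Type u} [Group G1] [Group G2] {f f' : G1 →* G2}
    (hff : f = f') (ρ2 : G2 →* Multiplicative (AddAut M)) (ρ1 : G1 →* Multiplicative (AddAut M))
    (h1 : ∀ x, ρ1 x = ρ2 (f x)) (h1' : ∀ x, ρ1 x = ρ2 (f' x)) (n : ℕ) (z : groupCoh ρ2 n) :
    cohMap f ρ2 ρ1 h1 n z = cohMap f' ρ2 ρ1 h1' n z := by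
  subst hff
  rfl

/-- Cohomology is annihilated by any exponent of the coefficient module. -/
lemma groupCoh_torsion (q : ℕ) (hq : ∀ m : M, q • m = 0) (n : ℕ) (x : groupCoh ρ n) :
    q • x = 0 := by
  refine QuotientAddGroup.induction_on x fun z => ?_
  have h1 : q • (QuotientAddGroup.mk z : groupCoh ρ n) = QuotientAddGroup.mk (q • z) :=
    (map_nsmul (QuotientAddGroup.mk'
      ((coboundaryGroup ρ n).addSubgroupOf (cocycleGroup ρ n))) q z).symm
  refine h1.trans ?_
  have h2 : q • z = 0 := by
    apply Subtype.ext
    show q • z.1 = 0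
    funext g
    rw [Pi.smul_apply, hq]
    rfl
  rw [h2]
  rfl

lemma pp_hom {Γb : Type u} [Group Γb] (φ : Γ →* Γb) {n : ℕ} (g : Fin n → Γ) :
    ∀ k, Fin.partialProd (fun i => φ (g i)) k = φ (Fin.partialProd g k) := by
  intro k
  induction k using Fin.induction with
  | zero => rw [Fin.partialProd_zero, Fin.partialProd_zero, map_one]
  | succ i ih =>
      rw [Fin.partialProd_succ, Fin.partialProd_succ, map_mul, ih]

/-- Corestriction commutes with inflation (for compatible transversal data). -/
lemma coresMap_inflation
    {Γb Δb : Type u} [Group Γb] [Group Δb]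
    (ρb : Γb →* Multiplicative (AddAut M)) (ρΔb : Δb →* Multiplicative (AddAut M))
    (jb : Δb →* Γb) (πΓ : Γ →* Γb) (πΔ : Δ →* Δb)
    (hρ : ∀ g, ρ g = ρb (πΓ g)) (hρΔ : ∀ δ, ρΔ δ = ρΔb (πΔ δ))
    (hcomp : ∀ δ, ρΔ δ = ρ (j δ)) (hcompb : ∀ δ, ρΔb δ = ρb (jb δ))
    (D : CoresData Γ Δ j ι) (Db : CoresData Γb Δb jb ι)
    (hTb : ∀ i, Db.T i = πΓ (D.T i)) (hκb : ∀ g, Db.κ (πΓ g) = πΔ (D.κ g))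
    (n : ℕ) (z : groupCoh ρΔb n) :
    cohMap πΓ ρb ρ hρ n (coresMap ρb ρΔb jb hcompb Db n z)
      = coresMap ρ ρΔ j hcomp D n (cohMap πΔ ρΔb ρΔ hρΔ n z) := by
  refine QuotientAddGroup.induction_on z fun w => ?_
  have key : precompCochain πΓ n (coresC ρb ρΔb jb Db w.1)
      = coresC ρ ρΔ j D (precompCochain πΔ n w.1) := by
    funext g
    show coresC ρb ρΔb jb Db w.1 (fun i => πΓ (g i))
        = toI (nmK ρ D.κ D.T (toH ρΔ (precompCochain πΔ n w.1))) g
    rw [toH_precomp ρΔb ρΔ πΔ hρΔ]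
    show nmK ρb Db.κ Db.T (toH ρΔb w.1) (Fin.partialProd (fun i => πΓ (g i)))
        = nmK ρ D.κ D.T (fun y => toH ρΔb w.1 (fun k => πΔ (y k))) (Fin.partialProd g)
    show ∑ i : ι, ρb (Db.T i) (toH ρΔb w.1
          (fun k => Db.κ ((Db.T i)⁻¹ * Fin.partialProd (fun t => πΓ (g t)) k)))
      = ∑ i : ι, ρ (D.T i) (toH ρΔb w.1
          (fun k => πΔ (D.κ ((D.T i)⁻¹ * Fin.partialProd g k))))
    refine Finset.sum_congr rfl fun i _ => ?_
    rw [hρ, ← hTb]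
    congr 1
    refine congrArg (toH ρΔb w.1) (funext fun k => ?_)
    rw [← hκb, map_mul, map_inv, ← hTb, pp_hom]
  show QuotientAddGroup.mk
      (cocycleMap πΓ ρb ρ hρ n (coresCocycle ρb ρΔb jb hcompb Db n w))
    = QuotientAddGroup.mk
      (coresCocycle ρ ρΔ j hcomp D n (cocycleMap πΔ ρΔb ρΔ hρΔ n w))
  exact congrArg QuotientAddGroup.mk (Subtype.ext key)

end ClassLevel

end Weigel

namespace Weigel

section Data

variable {G : Type u} [Group G]

/-- The canonical transversal data for a finite-index subgroup. -/
noncomputable def subgroupData (H : Subgroup G) [Fintype (G ⧸ H)] :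
    CoresData G H H.subtype (G ⧸ H) where
  T := Quotient.out
  κ := fun g => ⟨g * Quotient.out (QuotientGroup.mk g⁻¹ : G ⧸ H), by
    have h1 : (QuotientGroup.mk g⁻¹ : G ⧸ H)
        = QuotientGroup.mk (Quotient.out (QuotientGroup.mk g⁻¹ : G ⧸ H)) :=
      (QuotientGroup.out_eq' _).symm
    have h2 := QuotientGroup.eq.mp h1
    rwa [inv_inv] at h2⟩
  c := QuotientGroup.mk
  hκ := by
    intro δ g
    apply Subtype.ext
    show (↑δ * g) * Quotient.out (QuotientGroup.mk (↑δ * g)⁻¹ : G ⧸ H)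
        = ↑δ * (g * Quotient.out (QuotientGroup.mk g⁻¹ : G ⧸ H))
    have h1 : (QuotientGroup.mk (↑δ * g)⁻¹ : G ⧸ H) = QuotientGroup.mk g⁻¹ := by
      rw [mul_inv_rev]
      exact QuotientGroup.mk_mul_of_mem g⁻¹ δ⁻¹.2
    rw [h1, mul_assoc]
  hT := by
    intro g
    have h1 : (Quotient.out (QuotientGroup.mk g : G ⧸ H))⁻¹ * g ∈ H :=
      QuotientGroup.eq.mp (QuotientGroup.out_eq' (QuotientGroup.mk g : G ⧸ H))
    refine ⟨⟨(Quotient.out (QuotientGroup.mk g : G ⧸ H))⁻¹ * g, h1⟩, ?_⟩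
    show g = Quotient.out (QuotientGroup.mk g : G ⧸ H)
        * ((Quotient.out (QuotientGroup.mk g : G ⧸ H))⁻¹ * g)
    group
  hc := by
    intro i δ
    show QuotientGroup.mk (Quotient.out i * ↑δ) = i
    rw [QuotientGroup.mk_mul_of_mem _ δ.2]
    exact QuotientGroup.out_eq' i

variable (H : Subgroup G) [Fintype (G ⧸ H)] (N₀ : Subgroup G) [N₀.Normal]

/-- The natural injection `H ⧸ (N₀ ∩ H) →* G ⧸ N₀`. -/
def quotJ : H ⧸ N₀.subgroupOf H →* G ⧸ N₀ :=
  haveI : (N₀.subgroupOf H).Normal := Subgroup.Normal.subgroupOf ‹N₀.Normal› H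
  QuotientGroup.map (N₀.subgroupOf H) N₀ H.subtype (fun x hx => hx)

lemma kappa_compat (hN₀H : N₀ ≤ H) (g n₀ : G) (hn : n₀ ∈ N₀) :
    haveI : (N₀.subgroupOf H).Normal := Subgroup.Normal.subgroupOf ‹N₀.Normal› H
    (QuotientGroup.mk ((subgroupData H).κ (g * n₀)) : H ⧸ N₀.subgroupOf H)
      = QuotientGroup.mk ((subgroupData H).κ g) := by
  haveI : (N₀.subgroupOf H).Normal := Subgroup.Normal.subgroupOf ‹N₀.Normal› H
  rw [QuotientGroup.eq]
  have h1 : (QuotientGroup.mk (g * n₀)⁻¹ : G ⧸ H) = QuotientGroup.mk g⁻¹ := by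
    rw [mul_inv_rev]
    have h2 : g * n₀ * g⁻¹ ∈ N₀ := ‹N₀.Normal›.conj_mem n₀ hn g
    refine QuotientGroup.eq.mpr ?_
    have : (n₀⁻¹ * g⁻¹)⁻¹ * g⁻¹ = g * n₀ * g⁻¹ := by group
    rw [this]
    exact hN₀H h2
  show ((subgroupData H).κ (g * n₀))⁻¹ * (subgroupData H).κ g ∈ N₀.subgroupOf H
  rw [Subgroup.mem_subgroupOf]
  show ((g * n₀ * Quotient.out (QuotientGroup.mk (g * n₀)⁻¹ : G ⧸ H))⁻¹
      * (g * Quotient.out (QuotientGroup.mk g⁻¹ : G ⧸ H)) : G) ∈ N₀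
  rw [h1]
  have : (g * n₀ * Quotient.out (QuotientGroup.mk g⁻¹ : G ⧸ H))⁻¹
      * (g * Quotient.out (QuotientGroup.mk g⁻¹ : G ⧸ H))
      = (Quotient.out (QuotientGroup.mk g⁻¹ : G ⧸ H))⁻¹ * n₀⁻¹
        * Quotient.out (QuotientGroup.mk g⁻¹ : G ⧸ H) := by group
  rw [this]
  have h3 := ‹N₀.Normal›.conj_mem n₀⁻¹ (inv_mem hn)
      (Quotient.out (QuotientGroup.mk g⁻¹ : G ⧸ H))⁻¹
  simpa [mul_assoc] using h3

lemma quot_c_compat (hN₀H : N₀ ≤ H) (g : G) :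
    (QuotientGroup.mk (Quotient.out (QuotientGroup.mk g : G ⧸ N₀)) : G ⧸ H)
      = QuotientGroup.mk g := by
  obtain ⟨n₀, hn₀⟩ := QuotientGroup.mk_out_eq_mul N₀ g
  rw [hn₀]
  exact QuotientGroup.mk_mul_of_mem g (hN₀H n₀.2)

lemma quot_kappa_compat (hN₀H : N₀ ≤ H) (g : G) :
    haveI : (N₀.subgroupOf H).Normal := Subgroup.Normal.subgroupOf ‹N₀.Normal› H
    (QuotientGroup.mk ((subgroupData H).κ (Quotient.out (QuotientGroup.mk g : G ⧸ N₀)))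
        : H ⧸ N₀.subgroupOf H)
      = QuotientGroup.mk ((subgroupData H).κ g) := by
  obtain ⟨n₀, hn₀⟩ := QuotientGroup.mk_out_eq_mul N₀ g
  rw [hn₀]
  exact kappa_compat H N₀ hN₀H g n₀ n₀.2

/-- The descended transversal data for the pair of quotients by `N₀`. -/
noncomputable def quotientData (hN₀H : N₀ ≤ H) :
    haveI : (N₀.subgroupOf H).Normal := Subgroup.Normal.subgroupOf ‹N₀.Normal› H
    CoresData (G ⧸ N₀) (H ⧸ N₀.subgroupOf H) (quotJ H N₀) (G ⧸ H) :=
  haveI : (N₀.subgroupOf H).Normal := Subgroup.Normal.subgroupOf ‹N₀.Normal› H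
  { T := fun i => QuotientGroup.mk (Quotient.out i)
    κ := fun x => QuotientGroup.mk ((subgroupData H).κ (Quotient.out x))
    c := fun x => QuotientGroup.mk (Quotient.out x)
    hκ := by
      intro δb xb
      refine QuotientGroup.induction_on δb fun δ => ?_
      refine QuotientGroup.induction_on xb fun g => ?_
      have h1 : quotJ H N₀ (QuotientGroup.mk δ) * (QuotientGroup.mk g : G ⧸ N₀)
          = QuotientGroup.mk (↑δ * g) := rfl
      beta_reduce
      rw [h1, quot_kappa_compat H N₀ hN₀H (↑δ * g), quot_kappa_compat H N₀ hN₀H g]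
      have h2 : (subgroupData H).κ (↑δ * g) = δ * (subgroupData H).κ g :=
        (subgroupData H).hκ δ g
      rw [h2]
      rfl
    hT := by
      intro xb
      refine QuotientGroup.induction_on xb fun g => ?_
      obtain ⟨δ, hδ⟩ := (subgroupData H).hT g
      refine ⟨QuotientGroup.mk δ, ?_⟩
      beta_reduce
      rw [quot_c_compat H N₀ hN₀H g]
      have h2 : (quotJ H N₀) (QuotientGroup.mk δ) = (QuotientGroup.mk (↑δ : G) : G ⧸ N₀) := rfl
      rw [h2, ← QuotientGroup.mk_mul]
      exact congrArg QuotientGroup.mk hδ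
    hc := by
      intro i δb
      refine QuotientGroup.induction_on δb fun δ => ?_
      have h1 : (QuotientGroup.mk (Quotient.out i) : G ⧸ N₀) * quotJ H N₀ (QuotientGroup.mk δ)
          = QuotientGroup.mk (Quotient.out i * ↑δ) := rfl
      beta_reduce
      rw [h1, quot_c_compat H N₀ hN₀H]
      exact (subgroupData H).hc i δ }

end Data

end Weigel

namespace Weigel

section Descend

variable {G : Type u} [Group G]

lemma descend (H N₁ : Subgroup G) [N₁.Normal] [N₁.FiniteIndex] [H.FiniteIndex]
    (K' : Subgroup ↥H) (hK' : K'.index ≠ 0) :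
    ∃ N₀ : Subgroup G, N₀.Normal ∧ N₀.FiniteIndex ∧ N₀ ≤ N₁ ∧ N₀ ≤ H ∧
      N₀.subgroupOf H ≤ K' := by
  have hBH : K'.map H.subtype ≤ H := by
    rintro g ⟨y, hy, rfl⟩
    exact y.2
  haveI hBfin : (K'.map H.subtype).FiniteIndex := by
    constructor
    have h1 : (K'.map H.subtype).relIndex H * H.index = (K'.map H.subtype).index :=
      Subgroup.relIndex_mul_index hBH
    rw [← h1]
    apply mul_ne_zero
    · have h2 : (K'.map H.subtype).subgroupOf H = K' :=
        Subgroup.comap_map_eq_self_of_injective H.subtype_injective K'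
      have h3 : (K'.map H.subtype).relIndex H = K'.index := congrArg Subgroup.index h2
      rw [h3]
      exact hK'
    · exact ‹H.FiniteIndex›.index_ne_zero
  refine ⟨(K'.map H.subtype).normalCore ⊓ N₁, inferInstance, inferInstance, inf_le_right,
    le_trans inf_le_left (le_trans (K'.map H.subtype).normalCore_le hBH), ?_⟩
  intro y hy
  have hy1 : (y : G) ∈ (K'.map H.subtype).normalCore ⊓ N₁ := hy
  have hyB : (y : G) ∈ K'.map H.subtype := (K'.map H.subtype).normalCore_le hy1.1
  obtain ⟨w, hw, hwy⟩ := hyB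
  have hw2 : w = y := Subtype.ext hwy
  rwa [← hw2]

end Descend

end Weigel

open Weigel in
/-- Lemma 2.2 (Weigel): if every subgroup of finite index in `G` belongs to `𝒢(p)`, then
`G` belongs to `𝒢*(p)`. -/
theorem weigel_mem_GpStar (p : ℕ) (hp : p.Prime) (G : Type u) [Group G]
    (h : ∀ H : Subgroup G, H.FiniteIndex → InGp p H) : InGpStar p G := by
  classical
  intro M _ ρ hcard hfac
  obtain ⟨k, hk⟩ := hcard
  haveI hfp : Fact p.Prime := ⟨hp⟩
  have hMfin : Finite M := by
    refine Nat.finite_of_card_ne_zero ?_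
    rw [hk]
    exact pow_ne_zero k hp.ne_zero
  have hqM : ∀ m : M, p ^ k • m = 0 := by
    intro m
    rw [← hk]
    exact addOrderOf_dvd_iff_nsmul_eq_zero.mp (addOrderOf_dvd_natCard m)
  -- Sylow-type construction of a finite-index subgroup whose intersection with `N₁`
  -- has `p`-power index
  have CORE : ∀ N₁ : Subgroup G, N₁.Normal → N₁.FiniteIndex →
      ∃ H : Subgroup G, N₁ ≤ H ∧ H.FiniteIndex ∧
        (∃ m, (N₁.subgroupOf H).index = p ^ m) ∧ Nat.Coprime H.index (p ^ k) := by
    intro N₁ hN₁n hN₁f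
    haveI := hN₁n
    haveI := hN₁f
    haveI : Finite (G ⧸ N₁) := inferInstance
    obtain ⟨P⟩ : Nonempty (Sylow p (G ⧸ N₁)) := inferInstance
    set H : Subgroup G := (P : Subgroup (G ⧸ N₁)).comap (QuotientGroup.mk' N₁) with hHdef
    have hidxH : H.index = (P : Subgroup (G ⧸ N₁)).index :=
      Subgroup.index_comap_of_surjective _ (QuotientGroup.mk'_surjective N₁)
    refine ⟨H, ?_, ?_, ?_, ?_⟩
    · intro g hg
      show QuotientGroup.mk' N₁ g ∈ (P : Subgroup (G ⧸ N₁))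
      have h1 : QuotientGroup.mk' N₁ g = 1 := (QuotientGroup.eq_one_iff g).mpr hg
      rw [h1]
      exact one_mem _
    · exact ⟨by rw [hidxH]; exact Subgroup.index_ne_zero_of_finite⟩
    · have hmem : ∀ x : H, QuotientGroup.mk' N₁ (x : G) ∈ (P : Subgroup (G ⧸ N₁)) :=
        fun x => x.2
      set φ : H →* (P : Subgroup (G ⧸ N₁)) :=
        ((QuotientGroup.mk' N₁).comp H.subtype).codRestrict _ hmem with hφ
      have hsurj : Function.Surjective φ := by
        rintro ⟨q, hq⟩
        obtain ⟨g, hg⟩ := QuotientGroup.mk'_surjective N₁ q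
        exact ⟨⟨g, by rw [Subgroup.mem_comap, hg]; exact hq⟩, Subtype.ext hg⟩
      have hker : φ.ker = N₁.subgroupOf H := by
        ext x
        show φ x = 1 ↔ (x : G) ∈ N₁
        constructor
        · intro hx
          exact (QuotientGroup.eq_one_iff _).mp (congrArg Subtype.val hx)
        · intro hx
          exact Subtype.ext ((QuotientGroup.eq_one_iff ((x : G))).mpr hx)
      obtain ⟨m, hm⟩ := IsPGroup.iff_card.mp P.2
      refine ⟨m, ?_⟩
      have h2 : (N₁.subgroupOf H).index = Nat.card (P : Subgroup (G ⧸ N₁)) := by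
        rw [← hker, Subgroup.index_eq_card]
        exact Nat.card_congr (QuotientGroup.quotientKerEquivOfSurjective φ hsurj).toEquiv
      rw [h2]
      exact hm
    · rw [hidxH]
      exact Nat.Coprime.pow_right k
        (((Nat.Prime.coprime_iff_not_dvd hp).mpr P.not_dvd_index).symm)
  intro n
  constructor
  · -- surjectivity
    intro x
    obtain ⟨N, hNn, hNf, hNtriv⟩ := hfac
    haveI := hNn
    haveI := hNf
    obtain ⟨H, hNH, hHf, ⟨m, hm⟩, hcop⟩ := CORE N hNn hNf
    haveI := hHf
    haveI : Fintype (G ⧸ H) := Fintype.ofFinite _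
    have hidx : H.index = Fintype.card (G ⧸ H) := by
      rw [Subgroup.index_eq_card, Nat.card_eq_fintype_card]
    set ρH : ↥H →* Multiplicative (AddAut M) := ρ.comp H.subtype with hρHdef
    haveI hKn : (N.subgroupOf H).Normal := Subgroup.Normal.subgroupOf hNn H
    have h1K : ∀ y ∈ N.subgroupOf H, ρH y = 1 := fun y hy => hNtriv y.1 hy
    have hGp := h H hHf M ρH ⟨k, hk⟩ ⟨N.subgroupOf H, hKn, ⟨m, hm⟩, h1K⟩
    obtain ⟨K', hK'n, hK'pow, h1K', z, hz⟩ :=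
      (hGp n).1 (cohMap H.subtype ρ ρH (fun _ => rfl) n x)
    haveI := hK'n
    have hK'ne : K'.index ≠ 0 := by
      obtain ⟨m', hm'⟩ := hK'pow
      rw [hm']
      exact pow_ne_zero _ hp.ne_zero
    obtain ⟨N₀, hN₀n, hN₀f, hN₀N, hN₀H, hLK'⟩ := descend H N K' hK'ne
    haveI := hN₀n
    haveI := hN₀f
    haveI hLn : (N₀.subgroupOf H).Normal := Subgroup.Normal.subgroupOf hN₀n H
    have h1N₀ : ∀ y ∈ N₀, ρ y = 1 := fun y hy => hNtriv y (hN₀N hy)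
    have h1L : ∀ y ∈ N₀.subgroupOf H, ρH y = 1 := fun y hy => h1N₀ y.1 hy
    set L := N₀.subgroupOf H with hLdef
    set jb := quotJ H N₀ with hjbdef
    set ρb := quotAut ρ N₀ h1N₀ with hρbdef
    set ρΔb := quotAut ρH L h1L with hρΔbdef
    have hcompb : ∀ δ : ↥H ⧸ L, ρΔb δ = ρb (jb δ) := fun δ =>
      QuotientGroup.induction_on δ fun y => rfl
    have hcompup : ∀ y : ↥H, ρH y = ρ (H.subtype y) := fun _ => rfl
    have hρcomp : ∀ g : G, ρ g = ρb (QuotientGroup.mk' N₀ g) := fun _ => rfl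
    have hρΔcomp : ∀ y : ↥H, ρH y = ρΔb (QuotientGroup.mk' L y) := fun _ => rfl
    have hmapcomp : ∀ y : ↥H ⧸ L, ρΔb y = quotAut ρH K' h1K' (quotMapHom K' L hLK' y) :=
      fun y => QuotientGroup.induction_on y fun t => rfl
    set zbar := cohMap (quotMapHom K' L hLK') (quotAut ρH K' h1K') ρΔb hmapcomp n z
      with hzbardef
    have s1 : cohMap (QuotientGroup.mk' L) ρΔb ρH hρΔcomp n zbar
        = cohMap H.subtype ρ ρH (fun _ => rfl) n x := by
      rw [hzbardef, cohMap_comp (QuotientGroup.mk' L) (quotMapHom K' L hLK')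
        (quotAut ρH K' h1K') ρΔb ρH hmapcomp hρΔcomp (fun y => rfl) n z]
      rw [cohMap_congr (show (quotMapHom K' L hLK').comp (QuotientGroup.mk' L)
          = QuotientGroup.mk' K' from MonoidHom.ext fun y => rfl)
        (quotAut ρH K' h1K') ρH (fun y => rfl) (fun _ => rfl) n z]
      exact hz
    have main : H.index • x
        = cohMap (QuotientGroup.mk' N₀) ρb ρ hρcomp n
            (coresMap ρb ρΔb jb hcompb (quotientData H N₀ hN₀H) n zbar) := by
      rw [coresMap_inflation ρ ρH H.subtype ρb ρΔb jb (QuotientGroup.mk' N₀)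
        (QuotientGroup.mk' L) hρcomp hρΔcomp hcompup hcompb (subgroupData H)
        (quotientData H N₀ hN₀H) (fun i => rfl)
        (fun g => quot_kappa_compat H N₀ hN₀H g) n zbar]
      rw [s1]
      rw [show cohMap H.subtype ρ ρH (fun _ => rfl) n x
          = cohMap H.subtype ρ ρH hcompup n x from rfl]
      rw [coresMap_cohMap ρ ρH H.subtype hcompup (subgroupData H) n x]
      rw [hidx]
    obtain ⟨a, b, hab⟩ := Nat.isCoprime_iff_coprime.mpr hcop
    refine ⟨N₀, hN₀n, hN₀f, h1N₀,
      a • coresMap ρb ρΔb jb hcompb (quotientData H N₀ hN₀H) n zbar, ?_⟩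
    have final : cohMap (QuotientGroup.mk' N₀) ρb ρ hρcomp n
        (a • coresMap ρb ρΔb jb hcompb (quotientData H N₀ hN₀H) n zbar) = x := by
      rw [map_zsmul, ← main]
      have h5 : (a * ((H.index : ℕ) : ℤ)) • x + (b * (((p ^ k : ℕ)) : ℤ)) • x = x := by
        rw [← add_zsmul, hab, one_zsmul]
      rw [mul_zsmul, mul_zsmul, natCast_zsmul, natCast_zsmul,
        groupCoh_torsion ρ (p ^ k) hqM n x, smul_zero, add_zero] at h5
      exact h5
    exact final
  · -- injectivity
    intro N₁ hN₁n hN₁f h1₁ z hz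
    haveI := hN₁n
    haveI := hN₁f
    obtain ⟨H, hNH, hHf, ⟨m, hm⟩, hcop⟩ := CORE N₁ hN₁n hN₁f
    haveI := hHf
    haveI : Fintype (G ⧸ H) := Fintype.ofFinite _
    have hidx : H.index = Fintype.card (G ⧸ H) := by
      rw [Subgroup.index_eq_card, Nat.card_eq_fintype_card]
    set ρH : ↥H →* Multiplicative (AddAut M) := ρ.comp H.subtype with hρHdef
    haveI hKn : (N₁.subgroupOf H).Normal := Subgroup.Normal.subgroupOf hN₁n H
    set K := N₁.subgroupOf H with hKdef
    have h1K : ∀ y ∈ K, ρH y = 1 := fun y hy => h1₁ y.1 hy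
    have hGp := h H hHf M ρH ⟨k, hk⟩ ⟨K, hKn, ⟨m, hm⟩, h1K⟩
    set jN : ↥H ⧸ K →* G ⧸ N₁ := QuotientGroup.map K N₁ H.subtype (fun y hy => hy)
      with hjNdef
    have hjNcomp : ∀ y : ↥H ⧸ K, quotAut ρH K h1K y = quotAut ρ N₁ h1₁ (jN y) :=
      fun y => QuotientGroup.induction_on y fun t => rfl
    set zH := cohMap jN (quotAut ρ N₁ h1₁) (quotAut ρH K h1K) hjNcomp n z with hzHdef
    have hzH0 : cohMap (QuotientGroup.mk' K) (quotAut ρH K h1K) ρH (fun _ => rfl) n zH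
        = 0 := by
      rw [hzHdef, cohMap_comp (QuotientGroup.mk' K) jN (quotAut ρ N₁ h1₁)
        (quotAut ρH K h1K) ρH hjNcomp (fun _ => rfl) (fun y => rfl) n z]
      rw [cohMap_congr (show jN.comp (QuotientGroup.mk' K)
          = (QuotientGroup.mk' N₁).comp H.subtype from MonoidHom.ext fun y => rfl)
        (quotAut ρ N₁ h1₁) ρH (fun y => rfl) (fun y => rfl) n z]
      rw [← cohMap_comp H.subtype (QuotientGroup.mk' N₁) (quotAut ρ N₁ h1₁) ρ ρH
        (fun _ => rfl) (fun _ => rfl) (fun y => rfl) n z]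
      rw [hz, map_zero]
    obtain ⟨K', hK'n, hK'pow, hK'le, hvan⟩ := (hGp n).2 K hKn ⟨m, hm⟩ h1K zH hzH0
    haveI := hK'n
    have hK'ne : K'.index ≠ 0 := by
      obtain ⟨m', hm'⟩ := hK'pow
      rw [hm']
      exact pow_ne_zero _ hp.ne_zero
    obtain ⟨N₀, hN₀n, hN₀f, hN₀N, hN₀H, hLK'⟩ := descend H N₁ K' hK'ne
    haveI := hN₀n
    haveI := hN₀f
    haveI hLn : (N₀.subgroupOf H).Normal := Subgroup.Normal.subgroupOf hN₀n H
    refine ⟨N₀, hN₀n, hN₀f, hN₀N, ?_⟩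
    have h1L : ∀ y ∈ N₀.subgroupOf H, ρH y = 1 := fun y hy => h1₁ y.1 (hN₀N hy)
    set L := N₀.subgroupOf H with hLdef
    set jb := quotJ H N₀ with hjbdef
    set ρb := quotAut ρ N₀ (fun g hg => h1₁ g (hN₀N hg)) with hρbdef
    set ρΔb := quotAut ρH L h1L with hρΔbdef
    set w := cohMap (quotMapHom N₁ N₀ hN₀N) (quotAut ρ N₁ h1₁) ρb
      (quotAut_comp_quotMap ρ N₁ N₀ hN₀N h1₁) n z with hwdef
    show w = 0
    have hcompb : ∀ δ : ↥H ⧸ L, ρΔb δ = ρb (jb δ) := fun δ =>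
      QuotientGroup.induction_on δ fun y => rfl
    have hbig : ∀ y : ↥H ⧸ L,
        ρΔb y = quotAut ρ N₁ h1₁ (((quotMapHom N₁ N₀ hN₀N).comp jb) y) :=
      fun y => QuotientGroup.induction_on y fun t => rfl
    have hbig' : ∀ y : ↥H ⧸ L,
        ρΔb y = quotAut ρ N₁ h1₁
          ((jN.comp ((quotMapHom K K' hK'le).comp (quotMapHom K' L hLK'))) y) :=
      fun y => QuotientGroup.induction_on y fun t => rfl
    have hmid : ∀ y : ↥H ⧸ L,
        ρΔb y = quotAut ρH K h1K (((quotMapHom K K' hK'le).comp (quotMapHom K' L hLK')) y) :=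
      fun y => QuotientGroup.induction_on y fun t => rfl
    have hlow : ∀ y : ↥H ⧸ L,
        ρΔb y = quotAut ρH K' (fun g hg => h1K g (hK'le hg)) ((quotMapHom K' L hLK') y) :=
      fun y => QuotientGroup.induction_on y fun t => rfl
    have hres0 : cohMap jb ρb ρΔb hcompb n w = 0 := by
      rw [hwdef, cohMap_comp jb (quotMapHom N₁ N₀ hN₀N) (quotAut ρ N₁ h1₁) ρb ρΔb
        (quotAut_comp_quotMap ρ N₁ N₀ hN₀N h1₁) hcompb hbig n z]
      rw [cohMap_congr (show (quotMapHom N₁ N₀ hN₀N).comp jb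
          = jN.comp ((quotMapHom K K' hK'le).comp (quotMapHom K' L hLK')) from
          MonoidHom.ext fun y => QuotientGroup.induction_on y fun t => rfl)
        (quotAut ρ N₁ h1₁) ρΔb hbig hbig' n z]
      rw [← cohMap_comp ((quotMapHom K K' hK'le).comp (quotMapHom K' L hLK')) jN
        (quotAut ρ N₁ h1₁) (quotAut ρH K h1K) ρΔb hjNcomp hmid hbig' n z]
      rw [← cohMap_comp (quotMapHom K' L hLK') (quotMapHom K K' hK'le)
        (quotAut ρH K h1K) (quotAut ρH K' fun g hg => h1K g (hK'le hg)) ρΔb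
        (quotAut_comp_quotMap ρH K K' hK'le h1K) hlow hmid n zH]
      rw [hvan, map_zero]
    have hc2 := coresMap_cohMap ρb ρΔb jb hcompb (quotientData H N₀ hN₀H) n w
    rw [hres0, map_zero] at hc2
    have hcard0 : H.index • w = 0 := by
      rw [hidx]
      exact hc2.symm
    obtain ⟨a, b, hab⟩ := Nat.isCoprime_iff_coprime.mpr hcop
    have h5 : (a * ((H.index : ℕ) : ℤ)) • w + (b * (((p ^ k : ℕ)) : ℤ)) • w = w := by
      rw [← add_zsmul, hab, one_zsmul]
    rw [mul_zsmul, mul_zsmul, natCast_zsmul, natCast_zsmul, hcard0,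
      groupCoh_torsion ρb (p ^ k) hqM n w, smul_zero, smul_zero, add_zero] at h5
    exact h5.symm

end GoodProfinite
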